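/- Truth Lemma for the canonical model of T_NES: for every world w of M* and every term g of L_NES, the extended interpretation satisfies ρ^{*+}_w(g) = {m ∈ ℕ | g ∈ w(m)}. -/

import Mathlib

/-- Terms of the language L_NES: `g ::= A | K_i g | ¬g`. -/
inductive NesTerm (U I : Type) : Type
  | base : U → NesTerm U I
  | know : I → NesTerm U I → NesTerm U I
  | neg  : NesTerm U I → NesTerm U I

/-- Formulas of L_NES: `All g1 are g2` and `Some g1 is g2`. -/
inductive NesForm (U I : Type) : Type
  | all : NesTerm U I → NesTerm U I → NesForm U I
  | ex  : NesTerm U I → NesTerm U I → NesForm U I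

/-- The (defined) negation of an L_NES formula. -/
def NesForm.negf {U I : Type} : NesForm U I → NesForm U I
  | .all g1 g2 => .ex g1 (.neg g2)
  | .ex g1 g2 => .all g1 (.neg g2)

/-- Derivability in T_NES augmented with a set `extra` of additional axioms
(`extra = ∅` gives T_NES itself). -/
inductive NesDer {U I : Type} (extra : Set (NesForm U I)) :
    Set (NesForm U I) → NesForm U I → Prop
  | prem {Γ φ} : φ ∈ Γ → NesDer extra Γ φ
  | extraAx {Γ φ} : φ ∈ extra → NesDer extra Γ φ
  | allSelf {Γ} (g : NesTerm U I) : NesDer extra Γ (.all g g)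
  | tAx {Γ} (i : I) (g : NesTerm U I) : NesDer extra Γ (.all (.know i g) g)
  | dni {Γ} (g : NesTerm U I) : NesDer extra Γ (.all g (.neg (.neg g)))
  | dne {Γ} (g : NesTerm U I) : NesDer extra Γ (.all (.neg (.neg g)) g)
  | barbara {Γ g1 g2 g3} : NesDer extra Γ (.all g1 g2) → NesDer extra Γ (.all g2 g3) →
      NesDer extra Γ (.all g1 g3)
  | conv {Γ g1 g2} : NesDer extra Γ (.ex g1 g2) → NesDer extra Γ (.ex g2 g1)
  | exist {Γ g1 g2} : NesDer extra Γ (.ex g1 g2) → NesDer extra Γ (.ex g1 g1)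
  | nonEmpty {Γ g} : NesDer extra Γ (.all g (.neg g)) →
      NesDer extra Γ (.ex (.neg g) (.neg g))
  | raa {Γ φ ψ} : NesDer extra (insert φ Γ) ψ → NesDer extra (insert φ Γ) ψ.negf →
      NesDer extra Γ φ.negf
  | kRule {Γ g1 g2} (i : I) : NesDer extra (∅ : Set (NesForm U I)) (.all g1 g2) →
      NesDer extra Γ (.all (.know i g1) (.know i g2))

/-- Derivability in the system T_NES. -/
def TNes {U I : Type} : Set (NesForm U I) → NesForm U I → Prop := NesDer ∅

/-- The extra axioms of S4_NES: `All K_i g are K_i K_i g`. -/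
def S4Extra (U I : Type) : Set (NesForm U I) :=
  {φ | ∃ (i : I) (g : NesTerm U I), φ = .all (.know i g) (.know i (.know i g))}

/-- The extra axioms of S5_NES: those of S4_NES plus `All ¬K_i g are K_i ¬K_i g`. -/
def S5Extra (U I : Type) : Set (NesForm U I) :=
  S4Extra U I ∪ {φ | ∃ (i : I) (g : NesTerm U I),
    φ = .all (.neg (.know i g)) (.know i (.neg (.know i g)))}

/-- Derivability in the system S4_NES. -/
def S4Nes {U I : Type} : Set (NesForm U I) → NesForm U I → Prop := NesDer (S4Extra U I)

/-- Derivability in the system S5_NES. -/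
def S5Nes {U I : Type} : Set (NesForm U I) → NesForm U I → Prop := NesDer (S5Extra U I)

/-- A first-order Kripke model for L_NES with constant (nonempty) domain. -/
structure NesModel (U I : Type) where
  W : Type
  R : I → W → W → Prop
  D : Type
  dNonempty : Nonempty D
  val : W → U → Set D

/-- Interpretation of terms: `ρ⁺_w(A) = ρ_w(A)`, `ρ⁺_w(¬g) = D − ρ⁺_w(g)`,
`ρ⁺_w(K_i g) = ⋂_{w R_i v} ρ⁺_v(g)`. -/
def NesModel.interp {U I : Type} (M : NesModel U I) : M.W → NesTerm U I → Set M.D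
  | w, .base A => M.val w A
  | w, .know i g => {d | ∀ v, M.R i w v → d ∈ NesModel.interp M v g}
  | w, .neg g => (NesModel.interp M w g)ᶜ

/-- Satisfaction of L_NES formulas at a pointed model. -/
def NesModel.sat {U I : Type} (M : NesModel U I) (w : M.W) : NesForm U I → Prop
  | .all g1 g2 => M.interp w g1 ⊆ M.interp w g2
  | .ex g1 g2 => (M.interp w g1 ∩ M.interp w g2).Nonempty

/-- A pointed model satisfies a set of formulas. -/
def NesModel.satSet {U I : Type} (M : NesModel U I) (w : M.W)
    (Γ : Set (NesForm U I)) : Prop :=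
  ∀ φ ∈ Γ, M.sat w φ

/-- T models: every accessibility relation is reflexive. -/
def NesModel.IsT {U I : Type} (M : NesModel U I) : Prop := ∀ i, Reflexive (M.R i)

/-- S4 models: every accessibility relation is reflexive and transitive. -/
def NesModel.IsS4 {U I : Type} (M : NesModel U I) : Prop :=
  ∀ i, Reflexive (M.R i) ∧ Transitive (M.R i)

/-- S5 models: every accessibility relation is an equivalence relation. -/
def NesModel.IsS5 {U I : Type} (M : NesModel U I) : Prop := ∀ i, Equivalence (M.R i)

/-- A set of L_NES formulas is consistent (in the system with extra axioms `extra`)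
if no formula and its negation are both derivable from it. -/
def ConsistentIn {U I : Type} (extra : Set (NesForm U I)) (Γ : Set (NesForm U I)) : Prop :=
  ¬ ∃ ψ : NesForm U I, NesDer extra Γ ψ ∧ NesDer extra Γ ψ.negf

/-- Consistency in T_NES. -/
def Consistent {U I : Type} (Γ : Set (NesForm U I)) : Prop :=
  ConsistentIn ∅ Γ

/-- A maximal consistent set (w.r.t. T_NES): consistent, and no proper superset
is consistent. -/
def IsMCS {U I : Type} (Δ : Set (NesForm U I)) : Prop :=
  Consistent Δ ∧ ∀ Γ : Set (NesForm U I), Δ ⊆ Γ → Consistent Γ → Γ = Δ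

/-- A Δ-type: a set X of terms that respects Barbara relative to Δ, and contains
exactly one of g, ¬g for every term g. -/
def IsDeltaType {U I : Type} (Δ : Set (NesForm U I)) (X : Set (NesTerm U I)) : Prop :=
  (∀ g1 g2 : NesTerm U I, g1 ∈ X → TNes Δ (.all g1 g2) → g2 ∈ X) ∧
  (∀ g : NesTerm U I, g ∈ X ∨ NesTerm.neg g ∈ X) ∧
  (∀ g : NesTerm U I, ¬ (g ∈ X ∧ NesTerm.neg g ∈ X))

/-- Worlds of the canonical model for T_NES: pairs of an MCS Δ and a map from ℕ
to Δ-types. We write `w.f n` for `w(n)`. -/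
structure CanonW (U I : Type) where
  Δ : Set (NesForm U I)
  f : ℕ → Set (NesTerm U I)
  mcs : IsMCS Δ
  htype : ∀ n : ℕ, IsDeltaType Δ (f n)

/-- Accessibility in the canonical model for T_NES:
w R*_i w' iff K_i g ∈ w(n) implies g ∈ w'(n), for all n and g. -/
def RStar {U I : Type} (i : I) (w w' : CanonW U I) : Prop :=
  ∀ (n : ℕ) (g : NesTerm U I), NesTerm.know i g ∈ w.f n → g ∈ w'.f n

/-- The extended interpretation ρ^{*+} of terms in the canonical model of T_NES
(with domain ℕ). -/
def interpStar {U I : Type} : CanonW U I → NesTerm U I → Set ℕ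
  | w, .base A => {n | NesTerm.base A ∈ w.f n}
  | w, .know i g => {n | ∀ w' : CanonW U I, RStar i w w' → n ∈ interpStar w' g}
  | w, .neg g => (interpStar w g)ᶜ


section Aux
variable {U I : Type}

theorem der_mono {e Γ Γ' : Set (NesForm U I)} {φ} (h : NesDer e Γ φ) (hs : Γ ⊆ Γ') :
    NesDer e Γ' φ := by
  induction h generalizing Γ' with
  | prem h => exact .prem (hs h)
  | extraAx h => exact .extraAx h
  | allSelf g => exact .allSelf g
  | tAx i g => exact .tAx i g
  | dni g => exact .dni g
  | dne g => exact .dne g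
  | barbara _ _ ih1 ih2 => exact .barbara (ih1 hs) (ih2 hs)
  | conv _ ih => exact .conv (ih hs)
  | exist _ ih => exact .exist (ih hs)
  | nonEmpty _ ih => exact .nonEmpty (ih hs)
  | raa _ _ ih1 ih2 =>
      exact .raa (ih1 (Set.insert_subset_insert hs)) (ih2 (Set.insert_subset_insert hs))
  | kRule i h _ => exact .kRule i h

theorem der_contra {e Γ : Set (NesForm U I)} {a b : NesTerm U I}
    (h : NesDer e Γ (.all a b)) : NesDer e Γ (.all (.neg b) (.neg a)) :=
  NesDer.raa (φ := .ex (.neg b) a) (ψ := .ex a (.neg b))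
    (NesDer.conv (NesDer.prem (Set.mem_insert _ _)))
    (NesDer.barbara (der_mono h (Set.subset_insert _ _)) (NesDer.dni b))

theorem der_finite {e Γ : Set (NesForm U I)} {φ} (h : NesDer e Γ φ) :
    ∃ Γ₀ : Set (NesForm U I), Γ₀ ⊆ Γ ∧ Γ₀.Finite ∧ NesDer e Γ₀ φ := by
  induction h with
  | @prem Γ φ h => exact ⟨{φ}, Set.singleton_subset_iff.2 h, Set.finite_singleton _,
      .prem rfl⟩
  | extraAx h => exact ⟨∅, Set.empty_subset _, Set.finite_empty, .extraAx h⟩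
  | allSelf g => exact ⟨∅, Set.empty_subset _, Set.finite_empty, .allSelf g⟩
  | tAx i g => exact ⟨∅, Set.empty_subset _, Set.finite_empty, .tAx i g⟩
  | dni g => exact ⟨∅, Set.empty_subset _, Set.finite_empty, .dni g⟩
  | dne g => exact ⟨∅, Set.empty_subset _, Set.finite_empty, .dne g⟩
  | barbara _ _ ih1 ih2 =>
      obtain ⟨F1, hs1, hf1, hd1⟩ := ih1
      obtain ⟨F2, hs2, hf2, hd2⟩ := ih2
      exact ⟨F1 ∪ F2, Set.union_subset hs1 hs2, hf1.union hf2,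
        .barbara (der_mono hd1 Set.subset_union_left) (der_mono hd2 Set.subset_union_right)⟩
  | conv _ ih => obtain ⟨F, hs, hf, hd⟩ := ih; exact ⟨F, hs, hf, .conv hd⟩
  | exist _ ih => obtain ⟨F, hs, hf, hd⟩ := ih; exact ⟨F, hs, hf, .exist hd⟩
  | nonEmpty _ ih => obtain ⟨F, hs, hf, hd⟩ := ih; exact ⟨F, hs, hf, .nonEmpty hd⟩
  | @raa Γ φ ψ _ _ ih1 ih2 =>
      obtain ⟨F1, hs1, hf1, hd1⟩ := ih1
      obtain ⟨F2, hs2, hf2, hd2⟩ := ih2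
      refine ⟨(F1 ∪ F2) \ {φ}, ?_, (hf1.union hf2).diff, ?_⟩
      · intro x hx
        rcases Set.union_subset hs1 hs2 hx.1 with h | h
        · exact absurd h hx.2
        · exact h
      · refine .raa (ψ := ψ) (der_mono hd1 ?_) (der_mono hd2 ?_) <;>
        · intro x hx
          by_cases hxφ : x = φ
          · exact hxφ ▸ Set.mem_insert _ _
          · refine Set.mem_insert_of_mem _ ⟨?_, hxφ⟩
            first
            | exact Set.mem_union_left _ hx
            | exact Set.mem_union_right _ hx
  | kRule i h _ => exact ⟨∅, Set.empty_subset _, Set.finite_empty, .kRule i h⟩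

theorem finite_subset_chain {α : Type*} {c : Set (Set α)} (hc : IsChain (· ⊆ ·) c)
    (hne : c.Nonempty) {F : Set α} (hF : F.Finite) (hsub : F ⊆ ⋃₀ c) :
    ∃ t ∈ c, F ⊆ t := by
  refine Set.Finite.induction_on (motive := fun F _ => F ⊆ ⋃₀ c → ∃ t ∈ c, F ⊆ t) F hF
    (fun _ => ⟨hne.choose, hne.choose_spec, Set.empty_subset _⟩) ?_ hsub
  intro a F haF hFfin ih hsub'
  obtain ⟨t1, ht1, hFt1⟩ := ih (fun x hx => hsub' (Set.mem_insert_of_mem _ hx))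
  obtain ⟨t2, ht2, hat2⟩ := hsub' (Set.mem_insert a F)
  rcases hc.total ht1 ht2 with h | h
  · exact ⟨t2, ht2, Set.insert_subset hat2 (hFt1.trans h)⟩
  · exact ⟨t1, ht1, Set.insert_subset (h hat2) hFt1⟩

theorem lindenbaum {Γ : Set (NesForm U I)} (h : Consistent Γ) :
    ∃ Δ : Set (NesForm U I), Γ ⊆ Δ ∧ IsMCS Δ := by
  obtain ⟨Δ, hΓΔ, hmax⟩ := zorn_subset_nonempty {Γ' : Set (NesForm U I) | Consistent Γ'}
    (fun c hcS hchain hcne => by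
      refine ⟨⋃₀ c, ?_, fun s hs => Set.subset_sUnion_of_mem hs⟩
      rintro ⟨ψ, h1, h2⟩
      obtain ⟨F1, hs1, hf1, hd1⟩ := der_finite h1
      obtain ⟨F2, hs2, hf2, hd2⟩ := der_finite h2
      obtain ⟨t, htc, hFt⟩ := finite_subset_chain hchain hcne (hf1.union hf2)
        (Set.union_subset hs1 hs2)
      exact hcS htc ⟨ψ, der_mono hd1 (Set.subset_union_left.trans hFt),
        der_mono hd2 (Set.subset_union_right.trans hFt)⟩) Γ h
  exact ⟨Δ, hΓΔ, hmax.1, fun Γ' hΔΓ' hcons' => (hmax.2 hcons' hΔΓ').antisymm hΔΓ'⟩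

end Aux

section Aux2
variable {U I : Type}

theorem sat_negf (M : NesModel U I) (w : M.W) (ψ : NesForm U I) :
    M.sat w ψ.negf ↔ ¬ M.sat w ψ := by
  cases ψ with
  | all a b =>
      show (M.interp w a ∩ (M.interp w b)ᶜ).Nonempty ↔ ¬ M.interp w a ⊆ M.interp w b
      constructor
      · rintro ⟨d, hda, hdb⟩ hsub; exact hdb (hsub hda)
      · intro h
        obtain ⟨d, hda, hdb⟩ := Set.not_subset.1 h
        exact ⟨d, hda, hdb⟩
  | ex a b =>
      show M.interp w a ⊆ (M.interp w b)ᶜ ↔ ¬ (M.interp w a ∩ M.interp w b).Nonempty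
      constructor
      · rintro h ⟨d, hda, hdb⟩; exact h hda hdb
      · intro h d hda hdb; exact h ⟨d, hda, hdb⟩

theorem sound {Γ : Set (NesForm U I)} {φ} (h : NesDer (∅ : Set (NesForm U I)) Γ φ)
    (M : NesModel U I) (hrefl : ∀ i, Reflexive (M.R i)) :
    ∀ w, M.satSet w Γ → M.sat w φ := by
  induction h with
  | prem h => exact fun w hw => hw _ h
  | extraAx h => exact absurd h (Set.notMem_empty _)
  | allSelf g => exact fun w _ => subset_rfl
  | tAx i g => exact fun w _ d hd => hd w (hrefl i w)
  | dni g => exact fun w _ d hd hnd => hnd hd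
  | dne g => exact fun w _ d hd => not_not.1 hd
  | barbara _ _ ih1 ih2 => exact fun w hw => (ih1 w hw).trans (ih2 w hw)
  | conv _ ih =>
      intro w hw
      obtain ⟨d, h1, h2⟩ := ih w hw
      exact ⟨d, h2, h1⟩
  | exist _ ih =>
      intro w hw
      obtain ⟨d, h1, _⟩ := ih w hw
      exact ⟨d, h1, h1⟩
  | nonEmpty _ ih =>
      intro w hw
      obtain ⟨d⟩ := M.dNonempty
      refine ⟨d, fun hd => ih w hw hd hd, fun hd => ih w hw hd hd⟩
  | @raa Γ φ ψ _ _ ih1 ih2 =>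
      intro w hw
      rw [sat_negf]
      intro hφ
      have hw' : M.satSet w (insert φ Γ) := by
        intro χ hχ
        rcases hχ with rfl | hχ
        · exact hφ
        · exact hw _ hχ
      exact (sat_negf M w ψ).1 (ih2 w hw') (ih1 w hw')
  | @kRule Γ g1 g2 i _ ih =>
      intro w _ d hd v hv
      exact ih v (fun χ hχ => absurd hχ (Set.notMem_empty _)) (hd v hv)

theorem consistent_of_sat {Γ : Set (NesForm U I)} (M : NesModel U I)
    (hrefl : ∀ i, Reflexive (M.R i)) (w : M.W) (hw : M.satSet w Γ) : Consistent Γ := by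
  rintro ⟨ψ, h1, h2⟩
  exact (sat_negf M w ψ).1 (sound h2 M hrefl w hw) (sound h1 M hrefl w hw)

/-- A two-element one-world model showing no term is provably empty or universal. -/
def M2 (U I : Type) : NesModel U I where
  W := Unit
  R := fun _ _ _ => True
  D := Bool
  dNonempty := ⟨true⟩
  val := fun _ _ => {true}

theorem M2_interp (t : NesTerm U I) (w : Unit) :
    (M2 U I).interp w t = {true} ∨ (M2 U I).interp w t = {false} := by
  induction t generalizing w with
  | base A => exact Or.inl rfl
  | know i g ih =>
      have : (M2 U I).interp w (.know i g) = (M2 U I).interp () g := by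
        ext d
        show (∀ v : Unit, True → d ∈ (M2 U I).interp v g) ↔ _
        exact ⟨fun h => h () trivial, fun h v _ => by cases v; exact h⟩
      rcases ih () with h | h
      · exact Or.inl (this.trans h)
      · exact Or.inr (this.trans h)
  | neg g ih =>
      rcases ih w with h | h
      · refine Or.inr ?_
        show ((M2 U I).interp w g)ᶜ = _
        rw [h]; ext b; show b ∈ ({true} : Set Bool)ᶜ ↔ b ∈ ({false} : Set Bool); cases b <;> simp
      · refine Or.inl ?_
        show ((M2 U I).interp w g)ᶜ = _
        rw [h]; ext b; show b ∈ ({false} : Set Bool)ᶜ ↔ b ∈ ({true} : Set Bool); cases b <;> simp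

theorem no_univ (t : NesTerm U I) : ¬ TNes (∅ : Set (NesForm U I)) (.all (.neg t) t) := by
  intro h
  have hs := sound h (M2 U I) (fun _ _ => trivial) () (fun χ hχ => absurd hχ (Set.notMem_empty _))
  have hs' : ((M2 U I).interp () t)ᶜ ⊆ (M2 U I).interp () t := hs
  rcases M2_interp t () with h' | h' <;> rw [h'] at hs'
  · have := hs' (show false ∈ ({true}ᶜ : Set Bool) by simp)
    exact absurd (show false = true from this) (by decide)
  · have := hs' (show true ∈ ({false}ᶜ : Set Bool) by simp)
    exact absurd (show true = false from this) (by decide)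

end Aux2

section Aux3
variable {U I : Type}

/-- The theorem-level inclusion preorder on terms. -/
inductive Nle : NesTerm U I → NesTerm U I → Prop
  | refl (a) : Nle a a
  | trans {a b c} : Nle a b → Nle b c → Nle a c
  | t (i) (a) : Nle (.know i a) a
  | dni (a) : Nle a (.neg (.neg a))
  | dne (a) : Nle (.neg (.neg a)) a
  | kmono (i) {a b} : Nle a b → Nle (.know i a) (.know i b)
  | contra {a b} : Nle a b → Nle (.neg b) (.neg a)

theorem nle_thm {a b : NesTerm U I} (h : Nle a b) :
    NesDer (∅ : Set (NesForm U I)) ∅ (.all a b) := by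
  induction h with
  | refl a => exact .allSelf a
  | trans _ _ ih1 ih2 => exact .barbara ih1 ih2
  | t i a => exact .tAx i a
  | dni a => exact .dni a
  | dne a => exact .dne a
  | kmono i _ ih => exact .kRule i ih
  | contra _ ih => exact der_contra ih

/-- Abstract laws of a derivability order sufficient for the type extension lemma. -/
structure LeLaws (le : NesTerm U I → NesTerm U I → Prop) : Prop where
  refl : ∀ a, le a a
  trans : ∀ {a b c}, le a b → le b c → le a c
  contra : ∀ {a b}, le a b → le (.neg b) (.neg a)
  dni : ∀ a, le a (.neg (.neg a))
  dne : ∀ a, le (.neg (.neg a)) a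
  hnc : ∀ a, ¬ (le a (.neg a) ∧ le (.neg a) a)

/-- Being a type w.r.t. an abstract derivability order. -/
def IsTypeLe (le : NesTerm U I → NesTerm U I → Prop) (X : Set (NesTerm U I)) : Prop :=
  (∀ g1 g2 : NesTerm U I, g1 ∈ X → le g1 g2 → g2 ∈ X) ∧
  (∀ g : NesTerm U I, g ∈ X ∨ NesTerm.neg g ∈ X) ∧
  (∀ g : NesTerm U I, ¬ (g ∈ X ∧ NesTerm.neg g ∈ X))

theorem type_extension {le : NesTerm U I → NesTerm U I → Prop} (L : LeLaws le)
    {S : Set (NesTerm U I)} (hS : ∀ a b, a ∈ S → b ∈ S → ¬ le a (.neg b)) :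
    ∃ X : Set (NesTerm U I), IsTypeLe le X ∧ S ⊆ X := by
  set Good : Set (Set (NesTerm U I)) :=
    {Y | S ⊆ Y ∧ ∀ a b, a ∈ Y → b ∈ Y → ¬ le a (.neg b)} with hGood
  obtain ⟨M, hSM, hM, hmax⟩ := zorn_subset_nonempty Good
    (fun c hcG hchain hcne => by
      refine ⟨⋃₀ c, ⟨fun x hx => Set.mem_sUnion.2
        ⟨hcne.choose, hcne.choose_spec, (hcG hcne.choose_spec).1 hx⟩, ?_⟩,
        fun s hs => Set.subset_sUnion_of_mem hs⟩
      rintro a b ⟨Y1, hY1, haY1⟩ ⟨Y2, hY2, hbY2⟩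
      rcases hchain.total hY1 hY2 with h | h
      · exact (hcG hY2).2 a b (h haY1) hbY2
      · exact (hcG hY1).2 a b haY1 (h hbY2)) S ⟨subset_rfl, hS⟩
  have hMG : M ∈ Good := hM
  -- M is upward closed
  have hclosed : ∀ g1 g2, g1 ∈ M → le g1 g2 → g2 ∈ M := by
    intro g1 g2 hg1 hle
    have hup : (M ∪ {b | ∃ a ∈ M, le a b}) ∈ Good := by
      refine ⟨hMG.1.trans Set.subset_union_left, ?_⟩
      rintro a b (ha | ⟨a0, ha0, hlea⟩) (hb | ⟨b0, hb0, hleb⟩)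
      · exact hMG.2 a b ha hb
      · intro hab
        exact hMG.2 a b0 ha hb0 (L.trans hab (L.contra hleb))
      · intro hab
        exact hMG.2 a0 b ha0 hb (L.trans hlea hab)
      · intro hab
        exact hMG.2 a0 b0 ha0 hb0 (L.trans hlea (L.trans hab (L.contra hleb)))
    have := hmax hup Set.subset_union_left
    exact this (Set.mem_union_right _ ⟨g1, hg1, hle⟩)
  refine ⟨M, ⟨hclosed, ?_, ?_⟩, hSM⟩
  · -- totality
    intro g
    by_contra hcon
    push_neg at hcon
    obtain ⟨hg, hng⟩ := hcon
    have fail1 : ¬ insert g M ∈ Good := by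
      intro hins
      exact hg (hmax hins (Set.subset_insert _ _) (Set.mem_insert _ _))
    have fail2 : ¬ insert (NesTerm.neg g) M ∈ Good := by
      intro hins
      exact hng (hmax hins (Set.subset_insert _ _) (Set.mem_insert _ _))
    have P1 : le g (.neg g) := by
      by_contra hP1
      apply fail1
      refine ⟨hMG.1.trans (Set.subset_insert _ _), ?_⟩
      rintro a b (rfl | ha) (rfl | hb)
      · exact hP1
      · intro hab
        exact hng (hclosed b _ hb (L.trans (L.dni b) (L.contra hab)))
      · intro hab
        exact hng (hclosed a _ ha hab)
      · exact hMG.2 a b ha hb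
    have P2 : le (.neg g) g := by
      by_contra hP2
      apply fail2
      refine ⟨hMG.1.trans (Set.subset_insert _ _), ?_⟩
      rintro a b (rfl | ha) (rfl | hb)
      · intro hab
        exact hP2 (L.trans hab (L.dne g))
      · intro hab
        exact hg (hclosed b _ hb (L.trans (L.dni b) (L.trans (L.contra hab) (L.dne g))))
      · intro hab
        exact hg (hclosed a _ ha (L.trans hab (L.dne g)))
      · exact hMG.2 a b ha hb
    exact L.hnc g ⟨P1, P2⟩
  · -- consistency
    rintro g ⟨hg, hng⟩
    exact hMG.2 g (.neg g) hg hng (L.dni g)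

theorem nleLaws : LeLaws (Nle (U := U) (I := I)) where
  refl := Nle.refl
  trans := Nle.trans
  contra := Nle.contra
  dni := Nle.dni
  dne := Nle.dne
  hnc := fun a ⟨_, h2⟩ => no_univ a (nle_thm h2)

end Aux3

section Aux4
variable {U I : Type}

/-- The inner canonical model over theorem-level (`Nle`) types. -/
def MN (U I : Type) : NesModel U I where
  W := ℕ → {X : Set (NesTerm U I) // IsTypeLe Nle X}
  R := fun i f f' => ∀ (n : ℕ) (h : NesTerm U I), NesTerm.know i h ∈ (f n).1 → h ∈ (f' n).1
  D := ℕ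
  dNonempty := ⟨0⟩
  val := fun f A => {n | NesTerm.base A ∈ (f n).1}

theorem MN_refl : ∀ i, Reflexive ((MN U I).R i) :=
  fun i f n h hm => (f n).2.1 _ _ hm (Nle.t i h)

/-- The seed set for constructing a successor type at coordinate `m`. -/
def seed (F : ℕ → Set (NesTerm U I)) (i : I) (t : NesTerm U I) (n m : ℕ) :
    Set (NesTerm U I) :=
  {h | NesTerm.know i h ∈ F m} ∪ (if m = n then {NesTerm.neg t} else ∅)

theorem seed_cond {F : ℕ → Set (NesTerm U I)} {i : I} {t : NesTerm U I} {n : ℕ}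
    (P1 : ∀ m x1 x2, NesTerm.know i x1 ∈ F m → NesTerm.know i x2 ∈ F m →
      ¬ Nle x1 (.neg x2))
    (P2 : ∀ x, NesTerm.know i x ∈ F n → ¬ Nle x t) (m : ℕ) :
    ∀ a b, a ∈ seed F i t n m → b ∈ seed F i t n m → ¬ Nle a (.neg b) := by
  rintro a b (ha | ha) (hb | hb) hab
  · exact P1 m a b ha hb hab
  · have hmn : m = n := by by_contra h; simp [h] at hb
    subst hmn
    have hb' : b = NesTerm.neg t := by simpa using hb
    subst hb'
    exact P2 a ha (Nle.trans hab (Nle.dne t))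
  · have hmn : m = n := by by_contra h; simp [h] at ha
    subst hmn
    have ha' : a = NesTerm.neg t := by simpa using ha
    subst ha'
    exact P2 b hb (Nle.trans (Nle.dni b) (Nle.trans (Nle.contra hab) (Nle.dne t)))
  · have hmn : m = n := by by_contra h; simp [h] at ha
    subst hmn
    have ha' : a = NesTerm.neg t := by simpa using ha
    have hb' : b = NesTerm.neg t := by simpa using hb
    subst ha'; subst hb'
    exact no_univ t (nle_thm (Nle.trans hab (Nle.dne t)))

theorem MN_truth (t : NesTerm U I) :
    ∀ f : (MN U I).W, (MN U I).interp f t = {n | t ∈ (f n).1} := by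
  induction t with
  | base A => intro f; rfl
  | neg g ih =>
      intro f; ext n
      show n ∈ ((MN U I).interp f g)ᶜ ↔ _
      rw [ih f]
      show ¬ (g ∈ (f n).1) ↔ NesTerm.neg g ∈ (f n).1
      constructor
      · intro h
        rcases (f n).2.2.1 g with hg | hg
        · exact absurd hg h
        · exact hg
      · intro h hg
        exact (f n).2.2.2 g ⟨hg, h⟩
  | know i g ih =>
      intro f; ext n
      show (∀ f', (MN U I).R i f f' → n ∈ (MN U I).interp f' g) ↔ NesTerm.know i g ∈ (f n).1
      constructor
      · intro h
        by_contra hK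
        have P1 : ∀ m x1 x2, NesTerm.know i x1 ∈ (f m).1 → NesTerm.know i x2 ∈ (f m).1 →
            ¬ Nle x1 (.neg x2) := by
          intro m x1 x2 h1 h2 hle
          have h3 : NesTerm.know i (NesTerm.neg x2) ∈ (f m).1 :=
            (f m).2.1 _ _ h1 (Nle.kmono i hle)
          have h4 : NesTerm.neg x2 ∈ (f m).1 := (f m).2.1 _ _ h3 (Nle.t i _)
          have h5 : x2 ∈ (f m).1 := (f m).2.1 _ _ h2 (Nle.t i _)
          exact (f m).2.2.2 x2 ⟨h5, h4⟩
        have P2 : ∀ x, NesTerm.know i x ∈ (f n).1 → ¬ Nle x g := by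
          intro x hx hle
          exact hK ((f n).2.1 _ _ hx (Nle.kmono i hle))
        have hseed : ∀ m : ℕ, ∃ X, IsTypeLe Nle X ∧ seed (fun k => (f k).1) i g n m ⊆ X := by
          intro m
          obtain ⟨X, hX, hSX⟩ := type_extension nleLaws
            (fun a b ha hb => seed_cond P1 P2 m a b ha hb)
          exact ⟨X, hX, hSX⟩
        choose X hX hSX using hseed
        set f' : (MN U I).W := fun m => ⟨X m, hX m⟩ with hf'
        have hR : (MN U I).R i f f' := by
          intro m h' hm
          exact hSX m (Set.mem_union_left _ (by exact hm))
        have hmem := h f' hR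
        rw [ih f'] at hmem
        have hng' : NesTerm.neg g ∈ seed (fun k => (f k).1) i g n n := by
          simp [seed]; exact Or.inr rfl
        have hng : NesTerm.neg g ∈ X n := hSX n hng'
        exact (hX n).2.2 g ⟨hmem, hng⟩
      · intro h f' hR
        rw [ih f']
        exact hR n g h

end Aux4

section Aux5
variable {U I : Type}

theorem exists_succ {w : CanonW U I} {i : I} {t : NesTerm U I} {n : ℕ}
    (hK : NesTerm.know i t ∉ w.f n) :
    ∃ w' : CanonW U I, RStar i w w' ∧ t ∉ w'.f n := by
  -- facts about the Δ-types of w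
  have P1 : ∀ m x1 x2, NesTerm.know i x1 ∈ w.f m → NesTerm.know i x2 ∈ w.f m →
      ¬ Nle x1 (.neg x2) := by
    intro m x1 x2 h1 h2 hle
    have h3 : NesTerm.know i (NesTerm.neg x2) ∈ w.f m :=
      (w.htype m).1 _ _ h1 (der_mono (nle_thm (Nle.kmono i hle)) (Set.empty_subset _))
    have h4 : NesTerm.neg x2 ∈ w.f m := (w.htype m).1 _ _ h3 (NesDer.tAx i _)
    have h5 : x2 ∈ w.f m := (w.htype m).1 _ _ h2 (NesDer.tAx i _)
    exact (w.htype m).2.2 x2 ⟨h5, h4⟩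
  have P2 : ∀ x, NesTerm.know i x ∈ w.f n → ¬ Nle x t := by
    intro x hx hle
    exact hK ((w.htype n).1 _ _ hx
      (der_mono (nle_thm (Nle.kmono i hle)) (Set.empty_subset _)))
  -- the set of existential formulas that a suitable successor MCS must contain
  set Sig0 : Set (NesForm U I) :=
    {ψ | ∃ m x1 x2, NesTerm.know i x1 ∈ w.f m ∧ NesTerm.know i x2 ∈ w.f m ∧
        ψ = .ex x1 x2} ∪
    ({ψ | ∃ x, NesTerm.know i x ∈ w.f n ∧ ψ = .ex x (.neg t)} ∪
      {.ex (.neg t) (.neg t)}) with hSig0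
  -- Sig0 is consistent: it is satisfied in the inner model MN
  have hseedN : ∀ m : ℕ, ∃ X, IsTypeLe Nle X ∧ seed w.f i t n m ⊆ X :=
    fun m => type_extension nleLaws (fun a b ha hb => seed_cond P1 P2 m a b ha hb)
  choose XN hXN hSXN using hseedN
  set fSig : (MN U I).W := fun m => ⟨XN m, hXN m⟩ with hfSig
  have hsat : (MN U I).satSet fSig Sig0 := by
    rintro ψ (⟨m, x1, x2, h1, h2, rfl⟩ | ⟨x, hx, rfl⟩ | rfl)
    · show ((MN U I).interp fSig x1 ∩ (MN U I).interp fSig x2).Nonempty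
      rw [MN_truth, MN_truth]
      exact ⟨m, hSXN m (Set.mem_union_left _ (by exact h1)),
        hSXN m (Set.mem_union_left _ (by exact h2))⟩
    · show ((MN U I).interp fSig x ∩ (MN U I).interp fSig (.neg t)).Nonempty
      rw [MN_truth, MN_truth]
      refine ⟨n, hSXN n (Set.mem_union_left _ (by exact hx)), hSXN n ?_⟩
      have : NesTerm.neg t ∈ seed w.f i t n n := by simp [seed]
      exact this
    · show ((MN U I).interp fSig (.neg t) ∩ (MN U I).interp fSig (.neg t)).Nonempty
      rw [MN_truth]
      have : NesTerm.neg t ∈ seed w.f i t n n := by simp [seed]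
      exact ⟨n, hSXN n this, hSXN n this⟩
  have hcons : Consistent Sig0 := consistent_of_sat (MN U I) MN_refl fSig hsat
  -- extend Sig0 to an MCS Δ'
  obtain ⟨Δ', hSigD', hMCS⟩ := lindenbaum hcons
  -- the Δ'-derivability order
  set le' : NesTerm U I → NesTerm U I → Prop :=
    fun a b => NesDer (∅ : Set (NesForm U I)) Δ' (.all a b) with hle'
  have L' : LeLaws le' := {
    refl := fun a => NesDer.allSelf a
    trans := fun h1 h2 => NesDer.barbara h1 h2
    contra := fun h => der_contra h
    dni := fun a => NesDer.dni a
    dne := fun a => NesDer.dne a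
    hnc := fun a ⟨h1, h2⟩ => hMCS.1
      ⟨.ex (.neg a) (.neg a), NesDer.nonEmpty h1, NesDer.barbara h2 (NesDer.dni a)⟩ }
  -- seeds extend to Δ'-types
  have hseed' : ∀ m : ℕ, ∃ X, IsTypeLe le' X ∧ seed w.f i t n m ⊆ X := by
    intro m
    apply type_extension L'
    rintro a b (ha | ha) (hb | hb) hab
    · exact hMCS.1 ⟨.ex a b,
        NesDer.prem (hSigD' (Or.inl ⟨m, a, b, ha, hb, rfl⟩)), hab⟩
    · have hmn : m = n := by by_contra h; simp [h] at hb
      subst hmn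
      have hb' : b = NesTerm.neg t := by simpa using hb
      subst hb'
      exact hMCS.1 ⟨.ex a (.neg t),
        NesDer.prem (hSigD' (Or.inr (Or.inl ⟨a, ha, rfl⟩))), hab⟩
    · have hmn : m = n := by by_contra h; simp [h] at ha
      subst hmn
      have ha' : a = NesTerm.neg t := by simpa using ha
      subst ha'
      exact hMCS.1 ⟨.ex (.neg t) b,
        NesDer.conv (NesDer.prem (hSigD' (Or.inr (Or.inl ⟨b, hb, rfl⟩)))), hab⟩
    · have hmn : m = n := by by_contra h; simp [h] at ha
      subst hmn
      have ha' : a = NesTerm.neg t := by simpa using ha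
      have hb' : b = NesTerm.neg t := by simpa using hb
      subst ha'; subst hb'
      exact hMCS.1 ⟨.ex (.neg t) (.neg t),
        NesDer.prem (hSigD' (Or.inr (Or.inr rfl))), hab⟩
  choose X hX hSX using hseed'
  refine ⟨⟨Δ', fun m => X m, hMCS, fun m => hX m⟩, ?_, ?_⟩
  · intro m h hm
    exact hSX m (Set.mem_union_left _ (by exact hm))
  · intro ht
    have hnt : NesTerm.neg t ∈ seed w.f i t n n := by simp [seed]
    exact (hX n).2.2 t ⟨ht, hSX n hnt⟩

end Aux5

/-- Truth Lemma for the canonical model of T_NES: ρ^{*+}_w(g) = {m | g ∈ w(m)}. -/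
theorem truth_lemma_star (U I : Type) [Countable U]
    (w : CanonW U I) (g : NesTerm U I) :
    interpStar w g = {m : ℕ | g ∈ w.f m} := by
  induction g generalizing w with
  | base A => rfl
  | neg t ih =>
      ext m
      show m ∈ (interpStar w t)ᶜ ↔ NesTerm.neg t ∈ w.f m
      rw [ih w]
      simp only [Set.mem_compl_iff, Set.mem_setOf_eq]
      constructor
      · intro h
        rcases (w.htype m).2.1 t with ht | ht
        · exact absurd ht h
        · exact ht
      · intro h ht
        exact (w.htype m).2.2 t ⟨ht, h⟩
  | know i t ih =>
      ext n
      show (∀ w', RStar i w w' → n ∈ interpStar w' t) ↔ NesTerm.know i t ∈ w.f n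
      constructor
      · intro h
        by_contra hK
        obtain ⟨w', hR, hnt⟩ := exists_succ hK
        have hmem := h w' hR
        rw [ih w'] at hmem
        exact hnt hmem
      · intro h w' hR
        rw [ih w']
        exact hR n t h
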